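/- Let d ≥ 1, ω ∈ ℝ^d, and k ∈ ℤ^d with k ≠ 0, ω₁k₁ + ⋯ + ω_dk_d = 0, and such that the number of odd components of k is odd. Then there exist n, l ∈ ℕ^d with n ≠ l, Σ_i ω_i n_i = Σ_i ω_i l_i, and Σ_i n_i + Σ_i l_i odd (i.e., Σ n_i and Σ l_i have opposite parity). -/

import Mathlib

/-- if `k ∈ ℤ^d \ {0}` is a resonance vector (`Σ ω_i k_i = 0`) with an
odd number of odd components, then there exist `n, l ∈ ℕ^d`, `n ≠ l`, with
`Σ ω_i n_i = Σ ω_i l_i` and `Σ n_i + Σ l_i` odd (the two eigenfunctions `Ψ_n`, `Ψ_l`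
have opposite parity). -/
theorem opposite_parity_eigenfunctions_of_bad_resonance (d : ℕ) (hd : 1 ≤ d)
    (ω : Fin d → ℝ) (k : Fin d → ℤ) (hk0 : k ≠ 0)
    (hres : ∑ i, ω i * (k i : ℝ) = 0)
    (hodd : Odd (Finset.univ.filter (fun i => Odd (k i))).card) :
    ∃ n l : Fin d → ℕ, n ≠ l ∧
      (∑ i, ω i * (n i : ℝ)) = (∑ i, ω i * (l i : ℝ)) ∧
      Odd ((∑ i, n i) + (∑ i, l i)) := by
  refine ⟨fun i => (k i).toNat, fun i => (-(k i)).toNat, ?_, ?_, ?_⟩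
  · intro h
    apply hk0
    funext i
    have := congrFun h i
    have this : (k i).toNat = (-(k i)).toNat := this
    have h2 : ((k i).toNat : ℤ) - ((-(k i)).toNat : ℤ) = k i := Int.toNat_sub_toNat_neg (k i)
    show k i = 0
    omega
  · have key : ∀ i, ω i * ((k i).toNat : ℝ) - ω i * (((-(k i)).toNat : ℕ) : ℝ)
        = ω i * (k i : ℝ) := by
      intro i
      have h2 : ((k i).toNat : ℤ) - ((-(k i)).toNat : ℤ) = k i := Int.toNat_sub_toNat_neg (k i)
      have h3 : (((k i).toNat : ℝ)) - (((-(k i)).toNat : ℝ)) = (k i : ℝ) := by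
        exact_mod_cast congrArg (Int.cast : ℤ → ℝ) h2
      rw [← mul_sub, h3]
    have : (∑ i, ω i * ((k i).toNat : ℝ)) - (∑ i, ω i * (((-(k i)).toNat : ℕ) : ℝ))
        = ∑ i, ω i * (k i : ℝ) := by
      rw [← Finset.sum_sub_distrib]
      exact Finset.sum_congr rfl fun i _ => key i
    rw [hres] at this
    linarith
  · rw [← Finset.sum_add_distrib]
    rw [Finset.odd_sum_iff_odd_card_odd]
    convert hodd using 2
    ext i
    simp only [Finset.mem_filter, Finset.mem_univ, true_and]
    constructor
    · intro h
      rw [Int.odd_iff]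
      rw [Nat.odd_iff] at h
      omega
    · intro h
      rw [Int.odd_iff] at h
      rw [Nat.odd_iff]
      omega
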